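/- For coprime integers λ, μ with μ ≠ 0, and integers τ₀ ≠ 0, τ₁, the vector (μ²τ₀, λμτ₀, λ²τ₀ + μτ₁, λτ₁) ∈ ℤ⁴ is primitive (its entries have gcd 1) if and only if gcd(τ₀, τ₁) = 1. -/

import Mathlib

/-- For coprime λ, μ with μ ≠ 0 and τ₀ ≠ 0, the vector
(μ²τ₀, λμτ₀, λ²τ₀ + μτ₁, λτ₁) is primitive iff gcd(τ₀, τ₁) = 1. -/
theorem primitivity_criterion (l m τ0 τ1 : ℤ) (hlm : Int.gcd l m = 1)
    (hm : m ≠ 0) (hτ0 : τ0 ≠ 0) :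
    Int.gcd (Int.gcd (Int.gcd (m ^ 2 * τ0) (l * m * τ0)) (l ^ 2 * τ0 + m * τ1))
        (l * τ1) = 1 ↔ Int.gcd τ0 τ1 = 1 := by
  constructor
  · intro h
    set g := Int.gcd τ0 τ1 with hg
    have h0 : (g : ℤ) ∣ τ0 := Int.gcd_dvd_left _ _
    have h1 : (g : ℤ) ∣ τ1 := Int.gcd_dvd_right _ _
    have hd : (g : ℤ) ∣ (Int.gcd (Int.gcd (Int.gcd (m ^ 2 * τ0) (l * m * τ0))
        (l ^ 2 * τ0 + m * τ1)) (l * τ1) : ℤ) := by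
      refine Int.dvd_coe_gcd (Int.dvd_coe_gcd (Int.dvd_coe_gcd ?_ ?_) ?_) ?_
      · exact Dvd.dvd.mul_left h0 _
      · exact Dvd.dvd.mul_left h0 _
      · exact dvd_add (Dvd.dvd.mul_left h0 _) (Dvd.dvd.mul_left h1 _)
      · exact Dvd.dvd.mul_left h1 _
    rw [h] at hd
    exact_mod_cast Int.eq_one_of_dvd_one (by positivity) hd
  · intro h
    by_contra hne
    set d := Int.gcd (Int.gcd (Int.gcd (m ^ 2 * τ0) (l * m * τ0))
        (l ^ 2 * τ0 + m * τ1)) (l * τ1) with hd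
    obtain ⟨p, hp, hpd⟩ := Nat.exists_prime_and_dvd hne
    have hpz : Prime (p : ℤ) := Nat.prime_iff_prime_int.mp hp
    have hpdz : (p : ℤ) ∣ (d : ℤ) := Int.natCast_dvd_natCast.mpr hpd
    have e1 : (p : ℤ) ∣ m ^ 2 * τ0 :=
      hpdz.trans (((Int.gcd_dvd_left _ _).trans (Int.gcd_dvd_left _ _)).trans (Int.gcd_dvd_left _ _))
    have e2 : (p : ℤ) ∣ l ^ 2 * τ0 + m * τ1 :=
      hpdz.trans ((Int.gcd_dvd_left _ _).trans (Int.gcd_dvd_right _ _))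
    have e4 : (p : ℤ) ∣ l * τ1 := hpdz.trans (Int.gcd_dvd_right _ _)
    have hnot : ¬ ((p : ℤ) ∣ l ∧ (p : ℤ) ∣ m) := by
      rintro ⟨ha, hb⟩
      have : (p : ℤ) ∣ (Int.gcd l m : ℤ) := Int.dvd_coe_gcd ha hb
      rw [hlm] at this
      exact hp.one_lt.ne' (by exact_mod_cast Int.eq_one_of_dvd_one (by positivity) this)
    have key : (p : ℤ) ∣ τ0 ∧ (p : ℤ) ∣ τ1 := by
      by_cases hpm : (p : ℤ) ∣ m
      · have hpl : ¬ (p : ℤ) ∣ l := fun hl => hnot ⟨hl, hpm⟩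
        have ht1 : (p : ℤ) ∣ τ1 := (hpz.dvd_mul.mp e4).resolve_left hpl
        have ht0 : (p : ℤ) ∣ l ^ 2 * τ0 := by
          have : (p : ℤ) ∣ m * τ1 := Dvd.dvd.mul_right hpm _
          have := (dvd_sub e2 this)
          simpa using this
        rcases hpz.dvd_mul.mp ht0 with hl2 | ht0'
        · exact absurd ((hpz.dvd_of_dvd_pow hl2)) hpl
        · exact ⟨ht0', ht1⟩
      · have ht0 : (p : ℤ) ∣ τ0 := by
          rcases hpz.dvd_mul.mp e1 with hm2 | ht0'
          · exact absurd (hpz.dvd_of_dvd_pow hm2) hpm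
          · exact ht0'
        have ht1 : (p : ℤ) ∣ τ1 := by
          have : (p : ℤ) ∣ m * τ1 := by
            have := dvd_sub e2 (Dvd.dvd.mul_left ht0 (l ^ 2))
            simpa using this
          exact (hpz.dvd_mul.mp this).resolve_left hpm
        exact ⟨ht0, ht1⟩
    have : (p : ℤ) ∣ (Int.gcd τ0 τ1 : ℤ) := Int.dvd_coe_gcd key.1 key.2
    rw [h] at this
    exact hp.one_lt.ne' (by exact_mod_cast Int.eq_one_of_dvd_one (by positivity) this)
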